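/- Let K be a quadratic field with discriminant Δ_K ∉ {−3, −4}, and let γ = a + b√Δ_K ∈ K with a, b ∈ ℚ, γ ∉ ℚ, γ not a square in K, and Norm_{K/ℚ}(γ)·Δ_K not a square in ℚ. Suppose N := Norm_{K/ℚ}(γ) = s² for some s ∈ ℚ. Set c := (a − s)/2 and d := c/Δ_K. Then for every positive integer n: √γ ∈ K(ζ_n) if and only if √c ∈ ℚ(ζ_n) or √d ∈ ℚ(ζ_n). -/
import Mathlib


/-- Let `K = ℚ(√Δ)` be a quadratic field with fundamental discriminant `Δ ∉ {-3, -4}`, and let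
`γ = a + b√Δ ∈ K` with `γ ∉ ℚ`, `γ` not a square in `K`, and `Norm(γ)·Δ` not a square in `ℚ`.
Suppose `N := Norm(γ) = a² - b²Δ = s²` with `s ∈ ℚ`, and set `c := (a - s)/2`, `d := c/Δ`.
Then for every `n ≥ 1`: `√γ ∈ K(ζ_n)` iff `√c ∈ ℚ(ζ_n)` or `√d ∈ ℚ(ζ_n)`. -/
theorem sqrt_mem_iff_of_norm_square
    (Δ : ℤ) (hΔns : ¬ IsSquare Δ) (hΔ3 : Δ ≠ -3) (hΔ4 : Δ ≠ -4)
    (hΔfund : (Δ % 4 = 1 ∧ Squarefree Δ) ∨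
      ∃ d : ℤ, Δ = 4 * d ∧ Squarefree d ∧ (d % 4 = 2 ∨ d % 4 = 3))
    (sΔ : ℂ) (hsΔ : sΔ ^ 2 = (Δ : ℂ))
    (a b : ℚ) (γ : ℂ) (hγ : γ = (a : ℂ) + (b : ℂ) * sΔ)
    (hγQ : ¬ ∃ q : ℚ, γ = (q : ℂ))
    (hγsq : ¬ ∃ δ ∈ IntermediateField.adjoin ℚ {sΔ}, δ ^ 2 = γ)
    (hNΔ : ¬ IsSquare ((a ^ 2 - b ^ 2 * (Δ : ℚ)) * (Δ : ℚ)))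
    (s : ℚ) (hN : a ^ 2 - b ^ 2 * (Δ : ℚ) = s ^ 2)
    (c d : ℚ) (hc : c = (a - s) / 2) (hd : d = c / (Δ : ℚ)) :
    ∀ n : ℕ, 0 < n → ∀ ζ : ℂ, IsPrimitiveRoot ζ n →
      ∀ g : ℂ, g ^ 2 = γ →
        (g ∈ IntermediateField.adjoin ℚ {sΔ, ζ} ↔
          (∃ y ∈ IntermediateField.adjoin ℚ {ζ}, y ^ 2 = (c : ℂ)) ∨
          (∃ y ∈ IntermediateField.adjoin ℚ {ζ}, y ^ 2 = (d : ℂ))) := by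
  intro n hn ζ hζ g hg
  have ratMem : ∀ (T : IntermediateField ℚ ℂ) (q : ℚ), (q : ℂ) ∈ T := fun T q => by
    simpa using T.algebraMap_mem q
  have intMem : ∀ (T : IntermediateField ℚ ℂ) (m : ℤ), (m : ℂ) ∈ T := fun T m => by
    simpa using ratMem T (m : ℚ)
  have hΔ0 : (Δ : ℚ) ≠ 0 := by
    intro h
    have : Δ = 0 := by exact_mod_cast h
    exact hΔns (by rw [this]; exact ⟨0, by ring⟩)
  have hΔC : (Δ : ℂ) ≠ 0 := by
    intro h; exact hΔ0 (by exact_mod_cast h)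
  have hb : b ≠ 0 := by
    intro h
    exact hγQ ⟨a, by simp [hγ, h]⟩
  have hγ0 : γ ≠ 0 := by
    intro h
    exact hγQ ⟨0, by simp [h]⟩
  have hg0 : g ≠ 0 := by
    intro h; rw [h] at hg; exact hγ0 (by simpa using hg.symm)
  have has : a - s ≠ 0 := by
    intro h
    have h1 : a = s := by linarith
    have : b ^ 2 * (Δ : ℚ) = 0 := by
      have h2 := hN; rw [h1] at h2; linarith
    rcases mul_eq_zero.mp this with h2 | h2
    · exact hb (pow_eq_zero_iff (by norm_num) |>.mp h2)
    · exact hΔ0 h2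
  have hc0 : c ≠ 0 := by
    rw [hc]; exact div_ne_zero has two_ne_zero
  have hcC0 : (c : ℂ) ≠ 0 := by exact_mod_cast hc0
  have hd0 : d ≠ 0 := by rw [hd]; exact div_ne_zero hc0 hΔ0
  have hNC : (a : ℂ) ^ 2 - (b : ℂ) ^ 2 * (Δ : ℂ) = (s : ℂ) ^ 2 := by exact_mod_cast hN
  have hcC : (c : ℂ) = ((a : ℂ) - (s : ℂ)) / 2 := by exact_mod_cast hc
  have hdC : (d : ℂ) * (Δ : ℂ) = (c : ℂ) := by
    have h : (d : ℂ) = (c : ℂ) / (Δ : ℂ) := by exact_mod_cast hd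
    rw [h]; field_simp
  set L := IntermediateField.adjoin ℚ {sΔ, ζ} with hL
  set F := IntermediateField.adjoin ℚ {ζ} with hF
  have hsL : sΔ ∈ L := IntermediateField.subset_adjoin ℚ _ (by simp)
  have hζF : ζ ∈ F := IntermediateField.subset_adjoin ℚ _ (by simp)
  have hFL : F ≤ L := IntermediateField.adjoin.mono ℚ _ _ (by simp)
  have hq : γ ^ 2 - 2 * (a : ℂ) * γ + (s : ℂ) ^ 2 = 0 := by
    rw [hγ]; linear_combination (b : ℂ) ^ 2 * hsΔ - hNC
  have hac : 4 * (c : ℂ) ^ 2 + (b : ℂ) ^ 2 * (Δ : ℂ) = 4 * (a : ℂ) * (c : ℂ) := by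
    rw [hcC]; linear_combination -hNC
  have back : ∀ z : ℂ, z ∈ L → z ^ 2 = (c : ℂ) → g ∈ L := by
    intro z hzL hz2
    have hz0 : z ≠ 0 := by
      intro h; rw [h] at hz2; exact hcC0 (by simpa using hz2.symm)
    have hgz : (z + (b : ℂ) * sΔ / (2 * z)) ^ 2 = γ := by
      rw [hγ]
      field_simp
      linear_combination (4 * z ^ 2 + 4 * (c : ℂ) - 4 * (a : ℂ)) * hz2 + (b : ℂ) ^ 2 * hsΔ + hac
    have hfac : (g - (z + (b : ℂ) * sΔ / (2 * z))) * (g + (z + (b : ℂ) * sΔ / (2 * z))) = 0 := by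
      linear_combination hg - hgz
    have hmem : z + (b : ℂ) * sΔ / (2 * z) ∈ L :=
      add_mem hzL (div_mem (mul_mem (ratMem L b) hsL) (mul_mem (intMem L 2) hzL))
    rcases mul_eq_zero.mp hfac with h | h
    · have h' : g = z + (b : ℂ) * sΔ / (2 * z) := sub_eq_zero.mp h
      rw [h']; exact hmem
    · have h' : g = -(z + (b : ℂ) * sΔ / (2 * z)) := by linear_combination h
      rw [h']; exact neg_mem hmem
  constructor
  · -- forward
    intro hgL
    set y : ℂ := (g - (s : ℂ) / g) / 2 with hy
    have hyL : y ∈ L :=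
      div_mem (sub_mem hgL (div_mem (ratMem L s) hgL)) (intMem L 2)
    have hy2 : y ^ 2 = (c : ℂ) := by
      rw [hy]
      field_simp
      linear_combination (g ^ 2 + γ - 2 * (s : ℂ) - 4 * (c : ℂ)) * hg + hq + (-4 * γ) * hcC
    by_cases hsF : sΔ ∈ F
    · left
      have hLF : L ≤ F := by
        rw [hL]
        refine IntermediateField.adjoin_le_iff.mpr ?_
        intro x hx
        rcases hx with rfl | hx
        · exact hsF
        · simp only [Set.mem_singleton_iff] at hx; rw [hx]; exact hζF
      exact ⟨y, hLF hyL, hy2⟩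
    · have hdec : ∀ x ∈ L, ∃ u ∈ F, ∃ v ∈ F, x = u + v * sΔ := by
        intro x hx
        induction hx using IntermediateField.adjoin_induction with
        | mem x hx =>
          rcases hx with rfl | hx
          · exact ⟨0, zero_mem F, 1, one_mem F, by ring⟩
          · simp only [Set.mem_singleton_iff] at hx
            exact ⟨x, hx ▸ hζF, 0, zero_mem F, by ring⟩
        | algebraMap q =>
          exact ⟨(q : ℂ), ratMem F q, 0, zero_mem F, by simp⟩
        | add x₁ x₂ hx₁ hx₂ ih₁ ih₂ =>
          obtain ⟨u₁, hu₁, v₁, hv₁, rfl⟩ := ih₁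
          obtain ⟨u₂, hu₂, v₂, hv₂, rfl⟩ := ih₂
          exact ⟨u₁ + u₂, add_mem hu₁ hu₂, v₁ + v₂, add_mem hv₁ hv₂, by ring⟩
        | mul x₁ x₂ hx₁ hx₂ ih₁ ih₂ =>
          obtain ⟨u₁, hu₁, v₁, hv₁, rfl⟩ := ih₁
          obtain ⟨u₂, hu₂, v₂, hv₂, rfl⟩ := ih₂
          refine ⟨u₁ * u₂ + v₁ * v₂ * (Δ : ℂ),
            add_mem (mul_mem hu₁ hu₂) (mul_mem (mul_mem hv₁ hv₂) (intMem F Δ)),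
            u₁ * v₂ + v₁ * u₂, add_mem (mul_mem hu₁ hv₂) (mul_mem hv₁ hu₂), ?_⟩
          linear_combination (v₁ * v₂) * hsΔ
        | inv x₁ hx₁ ih =>
          obtain ⟨u, hu, v, hv, rfl⟩ := ih
          by_cases hv0 : v = 0
          · exact ⟨u⁻¹, inv_mem hu, 0, zero_mem F, by rw [hv0]; simp⟩
          · have hden : u ^ 2 - v ^ 2 * (Δ : ℂ) ≠ 0 := by
              intro hh
              apply hsF
              have hfac2 : (sΔ - u / v) * (sΔ + u / v) = 0 := by
                have hvC : (v : ℂ) ≠ 0 := hv0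
                field_simp
                linear_combination v ^ 2 * hsΔ - hh
              rcases mul_eq_zero.mp hfac2 with hh2 | hh2
              · have : sΔ = u / v := sub_eq_zero.mp hh2
                rw [this]; exact div_mem hu hv
              · have : sΔ = -(u / v) := by linear_combination hh2
                rw [this]; exact neg_mem (div_mem hu hv)
            have hx0 : u + v * sΔ ≠ 0 := by
              intro hh
              apply hden
              linear_combination (u - v * sΔ) * hh + v ^ 2 * hsΔ
            refine ⟨u / (u ^ 2 - v ^ 2 * (Δ : ℂ)),
              div_mem hu (sub_mem (pow_mem hu 2) (mul_mem (pow_mem hv 2) (intMem F Δ))),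
              -v / (u ^ 2 - v ^ 2 * (Δ : ℂ)),
              div_mem (neg_mem hv) (sub_mem (pow_mem hu 2) (mul_mem (pow_mem hv 2) (intMem F Δ))), ?_⟩
            have hmul : (u + v * sΔ) * (u / (u ^ 2 - v ^ 2 * (Δ : ℂ)) +
                -v / (u ^ 2 - v ^ 2 * (Δ : ℂ)) * sΔ) = 1 := by
              field_simp
              linear_combination (-v ^ 2) * hsΔ
            exact inv_eq_of_mul_eq_one_right hmul
      obtain ⟨u, huF, v, hvF, huv⟩ := hdec y hyL
      have hkey : 2 * u * v * sΔ = (c : ℂ) - u ^ 2 - v ^ 2 * (Δ : ℂ) := by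
        rw [← hy2, huv]; linear_combination (-v ^ 2) * hsΔ
      have huv0 : u * v = 0 := by
        by_contra h
        apply hsF
        have hh : sΔ = ((c : ℂ) - u ^ 2 - v ^ 2 * (Δ : ℂ)) / (2 * u * v) := by
          rw [← hkey]
          have hu0 : u ≠ 0 := fun hh => h (by rw [hh]; ring)
          have hv0 : v ≠ 0 := fun hh => h (by rw [hh]; ring)
          field_simp
        rw [hh]
        exact div_mem (sub_mem (sub_mem (ratMem F c) (pow_mem huF 2))
          (mul_mem (pow_mem hvF 2) (intMem F Δ)))
          (mul_mem (mul_mem (intMem F 2) huF) hvF)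
      rcases mul_eq_zero.mp huv0 with h | h
      · right
        refine ⟨v, hvF, ?_⟩
        have hvΔ : v ^ 2 * (Δ : ℂ) = (c : ℂ) := by
          rw [← hy2, huv, h]; linear_combination (-v ^ 2) * hsΔ
        exact mul_right_cancel₀ hΔC (hvΔ.trans hdC.symm)
      · left
        refine ⟨u, huF, ?_⟩
        rw [← hy2, huv, h]; ring
  · rintro (⟨y, hyF, hy2⟩ | ⟨y, hyF, hy2⟩)
    · exact back y (hFL hyF) hy2
    · refine back (y * sΔ) (mul_mem (hFL hyF) hsL) ?_
      rw [mul_pow, hy2, hsΔ, hdC]
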